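/- Define Δ(n) ≥ 0 by inf_{|z_k|≥1} max_{ν=1,...,n²}|∑_{k=1}^n z_k^ν| = √n + Δ(n). Assume for consecutive primes p_k ≤ n ≤ p_{k+1} that Δ(n) ≪ n^ε √(p_{k+1}−p_k) for every ε > 0, and assume ∑_{p_k ≤ X}(p_{k+1}−p_k)² ≪ X^{5/4+ε}. Then ∑_{n=1}^N |Δ(n)|² ≪ N^{5/4+ε} for every ε > 0. -/

import Mathlib

/-- `max_{ν = 1,...,n²} |∑_{k=1}^n z_k^ν|`. -/
noncomputable def turanMax (n : ℕ) (z : Fin n → ℂ) : ℝ :=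
  (((Finset.Icc 1 (n ^ 2)).sup fun ν => ‖∑ k, z k ^ ν‖₊ : NNReal) : ℝ)

/-- `inf_{|z_k| ≥ 1} max_{ν = 1,...,n²} |∑_{k=1}^n z_k^ν|`. -/
noncomputable def turanInf (n : ℕ) : ℝ :=
  sInf {r : ℝ | ∃ z : Fin n → ℂ, (∀ k, 1 ≤ ‖z k‖) ∧ r = turanMax n z}

private lemma prime_infinite' : (setOf Nat.Prime).Infinite := Nat.infinite_setOf_prime

private lemma nth_prime_zero' : Nat.nth Nat.Prime 0 = 2 := by
  have h2 : Nat.Prime 2 := Nat.prime_two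
  have h0 : Nat.count Nat.Prime 2 = 0 := by decide
  simpa [h0] using Nat.nth_count h2

private lemma count_le_aux {n : ℕ} (hn : 2 ≤ n) : Nat.count Nat.Prime (n + 1) ≤ n - 1 := by
  rw [Nat.count_eq_card_filter_range]
  calc (Finset.filter Nat.Prime (Finset.range (n+1))).card
      ≤ (Finset.Ico 2 (n+1)).card := by
        apply Finset.card_le_card
        intro m hm
        simp only [Finset.mem_filter, Finset.mem_range] at hm
        exact Finset.mem_Ico.mpr ⟨hm.2.two_le, hm.1⟩
    _ = n - 1 := by rw [Nat.card_Ico]; omega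

private lemma K_spec {n : ℕ} (hn : 2 ≤ n) :
    Nat.nth Nat.Prime (Nat.count Nat.Prime (n+1) - 1) ≤ n ∧
    n < Nat.nth Nat.Prime ((Nat.count Nat.Prime (n+1) - 1) + 1) := by
  set c := Nat.count Nat.Prime (n+1) with hc
  have hc1 : 1 ≤ c := by
    have h2 : Nat.nth Nat.Prime 0 < n + 1 := by rw [nth_prime_zero']; omega
    have := (Nat.lt_nth_iff_count_lt prime_infinite' (a := 0) (b := n+1)).mpr h2
    omega
  constructor
  · have h1 : c - 1 < c := by omega
    have := (Nat.lt_nth_iff_count_lt prime_infinite' (a := c - 1) (b := n+1)).mp h1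
    omega
  · have heq : c - 1 + 1 = c := by omega
    rw [heq]
    have : n + 1 ≤ Nat.nth Nat.Prime c :=
      (Nat.count_le_iff_le_nth prime_infinite' (a := n+1) (b := c)).mp le_rfl
    omega

open scoped Classical in
theorem stmt_18 (Δ : ℕ → ℝ) (hΔ0 : ∀ n, 0 ≤ Δ n)
    (hΔ : ∀ n : ℕ, turanInf n = Real.sqrt n + Δ n)
    (hpointwise : ∀ ε : ℝ, 0 < ε → ∃ C > 0, ∀ n k : ℕ,
      Nat.nth Nat.Prime k ≤ n → n ≤ Nat.nth Nat.Prime (k + 1) →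
      Δ n ≤ C * (n : ℝ) ^ ε *
        Real.sqrt ((Nat.nth Nat.Prime (k + 1) - Nat.nth Nat.Prime k : ℕ)))
    (hpeck : ∀ ε : ℝ, 0 < ε → ∃ C > 0, ∀ X : ℕ,
      ∑ k ∈ (Finset.range X).filter (fun k => Nat.nth Nat.Prime k ≤ X),
        ((Nat.nth Nat.Prime (k + 1) - Nat.nth Nat.Prime k : ℕ) : ℝ) ^ 2 ≤
          C * (X : ℝ) ^ ((5 : ℝ) / 4 + ε)) :
    ∀ ε : ℝ, 0 < ε → ∃ C > 0, ∀ N : ℕ,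
      ∑ n ∈ Finset.Icc 1 N, (Δ n) ^ 2 ≤ C * (N : ℝ) ^ ((5 : ℝ) / 4 + ε) := by
  -- Δ 1 = 0
  have hΔ1 : Δ 1 = 0 := by
    have hle : turanInf 1 ≤ 1 := by
      have hmem : (1 : ℝ) ∈ {r : ℝ | ∃ z : Fin 1 → ℂ, (∀ k, 1 ≤ ‖z k‖) ∧ r = turanMax 1 z} := by
        refine ⟨fun _ => 1, fun k => by simp, ?_⟩
        unfold turanMax
        norm_num
      have hbdd : BddBelow {r : ℝ | ∃ z : Fin 1 → ℂ, (∀ k, 1 ≤ ‖z k‖) ∧ r = turanMax 1 z} := by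
        refine ⟨0, fun r hr => ?_⟩
        obtain ⟨z, _, rfl⟩ := hr
        exact NNReal.coe_nonneg _
      exact csInf_le hbdd hmem
    have h1 := hΔ 1
    simp only [Nat.cast_one, Real.sqrt_one] at h1
    have := hΔ0 1
    linarith [h1 ▸ hle]
  intro ε hε
  obtain ⟨C₁, hC₁, h1⟩ := hpointwise (ε/4) (by linarith)
  obtain ⟨C₂, hC₂, h2⟩ := hpeck (ε/2) (by linarith)
  refine ⟨C₁^2 * C₂ + 1, by positivity, ?_⟩
  intro N
  rcases Nat.eq_zero_or_pos N with rfl | hN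
  · simp [Real.zero_rpow (show (5:ℝ)/4 + ε ≠ 0 by positivity)]
  have hN1 : (1 : ℝ) ≤ (N : ℝ) := by exact_mod_cast hN
  have hNpos : (0 : ℝ) < (N : ℝ) := by linarith
  -- the index function
  set K : ℕ → ℕ := fun n => Nat.count Nat.Prime (n+1) - 1 with hK
  set g : ℕ → ℝ := fun k => ((Nat.nth Nat.Prime (k+1) - Nat.nth Nat.Prime k : ℕ) : ℝ) with hg
  have hg0 : ∀ k, 0 ≤ g k := fun k => Nat.cast_nonneg _
  -- split off n = 1
  have hsplit : ∑ n ∈ Finset.Icc 1 N, (Δ n) ^ 2 = ∑ n ∈ Finset.Icc 2 N, (Δ n) ^ 2 := by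
    have : Finset.Icc 1 N = insert 1 (Finset.Icc 2 N) := by
      ext m; simp [Finset.mem_Icc, Finset.mem_insert]; omega
    rw [this, Finset.sum_insert (by simp), hΔ1]
    ring
  rw [hsplit]
  -- pointwise bound on each term
  have step1 : ∑ n ∈ Finset.Icc 2 N, (Δ n) ^ 2 ≤
      ∑ n ∈ Finset.Icc 2 N, C₁^2 * (N : ℝ) ^ (ε/2) * g (K n) := by
    apply Finset.sum_le_sum
    intro n hn
    rw [Finset.mem_Icc] at hn
    obtain ⟨hk1, hk2⟩ := K_spec hn.1
    have hb := h1 n (K n) hk1 hk2.le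
    have hrhs0 : 0 ≤ C₁ * (n : ℝ) ^ (ε/4) * Real.sqrt (g (K n)) := by positivity
    have hsq : (Δ n)^2 ≤ (C₁ * (n : ℝ) ^ (ε/4) * Real.sqrt (g (K n)))^2 :=
      pow_le_pow_left₀ (hΔ0 n) hb 2
    have hnpos : (0:ℝ) < (n:ℝ) := by exact_mod_cast (by omega : 0 < n)
    have hexp : ((n : ℝ) ^ (ε/4))^2 = (n : ℝ) ^ (ε/2) := by
      rw [← Real.rpow_natCast ((n:ℝ) ^ (ε/4)) 2, ← Real.rpow_mul hnpos.le]
      congr 1; norm_num; ring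
    have hmono : (n : ℝ) ^ (ε/2) ≤ (N : ℝ) ^ (ε/2) := by
      apply Real.rpow_le_rpow hnpos.le (by exact_mod_cast hn.2) (by linarith)
    calc (Δ n)^2 ≤ (C₁ * (n : ℝ) ^ (ε/4) * Real.sqrt (g (K n)))^2 := hsq
      _ = C₁^2 * ((n : ℝ) ^ (ε/4))^2 * (Real.sqrt (g (K n)))^2 := by ring
      _ = C₁^2 * (n : ℝ) ^ (ε/2) * g (K n) := by
          rw [hexp, Real.sq_sqrt (hg0 _)]
      _ ≤ C₁^2 * (N : ℝ) ^ (ε/2) * g (K n) := by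
          apply mul_le_mul_of_nonneg_right _ (hg0 _)
          apply mul_le_mul_of_nonneg_left hmono (by positivity)
  -- fiberwise bound
  set S := (Finset.range N).filter (fun k => Nat.nth Nat.Prime k ≤ N) with hS
  have hmaps : ∀ n ∈ Finset.Icc 2 N, K n ∈ S := by
    intro n hn
    rw [Finset.mem_Icc] at hn
    obtain ⟨hk1, _⟩ := K_spec hn.1
    have hcle := count_le_aux hn.1
    refine Finset.mem_filter.mpr ⟨Finset.mem_range.mpr ?_, le_trans hk1 hn.2⟩
    simp only [hK]
    omega
  have step2 : ∑ n ∈ Finset.Icc 2 N, g (K n) ≤ ∑ k ∈ S, (g k)^2 := by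
    rw [← Finset.sum_fiberwise_of_maps_to' hmaps g]
    apply Finset.sum_le_sum
    intro k hk
    rw [Finset.sum_const, nsmul_eq_mul]
    have hcard : ((Finset.Icc 2 N).filter (fun n => K n = k)).card ≤
        Nat.nth Nat.Prime (k+1) - Nat.nth Nat.Prime k := by
      have hsub : (Finset.Icc 2 N).filter (fun n => K n = k) ⊆
          Finset.Ico (Nat.nth Nat.Prime k) (Nat.nth Nat.Prime (k+1)) := by
        intro n hn
        rw [Finset.mem_filter, Finset.mem_Icc] at hn
        obtain ⟨⟨h2n, _⟩, hKn⟩ := hn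
        obtain ⟨hk1, hk2⟩ := K_spec h2n
        have hKn' : Nat.count Nat.Prime (n+1) - 1 = k := hKn
        rw [hKn'] at hk1 hk2
        exact Finset.mem_Ico.mpr ⟨hk1, hk2⟩
      calc ((Finset.Icc 2 N).filter (fun n => K n = k)).card
          ≤ (Finset.Ico (Nat.nth Nat.Prime k) (Nat.nth Nat.Prime (k+1))).card :=
            Finset.card_le_card hsub
        _ = Nat.nth Nat.Prime (k+1) - Nat.nth Nat.Prime k := Nat.card_Ico _ _
    have : (((Finset.Icc 2 N).filter (fun n => K n = k)).card : ℝ) ≤ g k := by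
      simp only [hg]; exact_mod_cast hcard
    calc (((Finset.Icc 2 N).filter (fun n => K n = k)).card : ℝ) * g k
        ≤ g k * g k := mul_le_mul_of_nonneg_right this (hg0 k)
      _ = (g k)^2 := by ring
  -- combine
  have hpeckN := h2 N
  calc ∑ n ∈ Finset.Icc 2 N, (Δ n) ^ 2
      ≤ ∑ n ∈ Finset.Icc 2 N, C₁^2 * (N : ℝ) ^ (ε/2) * g (K n) := step1
    _ = C₁^2 * (N : ℝ) ^ (ε/2) * ∑ n ∈ Finset.Icc 2 N, g (K n) := by
        rw [Finset.mul_sum]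
    _ ≤ C₁^2 * (N : ℝ) ^ (ε/2) * ∑ k ∈ S, (g k)^2 := by
        apply mul_le_mul_of_nonneg_left step2 (by positivity)
    _ ≤ C₁^2 * (N : ℝ) ^ (ε/2) * (C₂ * (N : ℝ) ^ ((5:ℝ)/4 + ε/2)) := by
        apply mul_le_mul_of_nonneg_left hpeckN (by positivity)
    _ = C₁^2 * C₂ * ((N : ℝ) ^ (ε/2) * (N : ℝ) ^ ((5:ℝ)/4 + ε/2)) := by ring
    _ = C₁^2 * C₂ * (N : ℝ) ^ ((5:ℝ)/4 + ε) := by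
        rw [← Real.rpow_add hNpos]
        congr 1; ring
    _ ≤ (C₁^2 * C₂ + 1) * (N : ℝ) ^ ((5:ℝ)/4 + ε) := by
        apply mul_le_mul_of_nonneg_right (by linarith) (by positivity)
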